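/- Let T > 0, x₀, P ∈ ℝ² with d = |P − x₀|, let τ : [0,T) → ℝ² be continuous with |τ(ξ)| = 1 for all ξ, and let ρ_{x₀}(P,ξ) = exp(−d²/(4(T−ξ)))/√(4π(T−ξ)). Then for every t ∈ [0,T): |∫_t^T ⟨(P−x₀)/(2(T−ξ)), τ(ξ)⟩ ρ_{x₀}(P,ξ) dξ| ≤ (1/√(2π)) ∫_{d/√(2(T−t))}^{+∞} e^{−y²/2} dy ≤ 1/2. Moreover, lim_{t→T} ∫_t^T ⟨(P−x₀)/(2(T−ξ)), τ(ξ)⟩ ρ_{x₀}(P,ξ) dξ = 0. -/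

import Mathlib

noncomputable section
open scoped RealInnerProductSpace
open MeasureTheory Filter Set

/-- The Euclidean plane. -/
abbrev E2 : Type := EuclideanSpace ℝ (Fin 2)

/-- Counterclockwise rotation of the plane by π/2. -/
def rot (v : E2) : E2 := (WithLp.equiv 2 (Fin 2 → ℝ)).symm ![-(v 1), v 0]

/-- Unit tangent vector `τ = γ_x/|γ_x|` of a curve `γ`. -/
def tangent (γ : ℝ → E2) (x : ℝ) : E2 := ‖deriv γ x‖⁻¹ • deriv γ x

/-- Unit normal vector `ν = R τ` of a curve `γ`. -/
def normal (γ : ℝ → E2) (x : ℝ) : E2 := rot (tangent γ x)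

/-- Curvature `k = ⟨γ_xx, ν⟩/|γ_x|²` of a curve `γ`. -/
def curvature (γ : ℝ → E2) (x : ℝ) : ℝ :=
  ⟪deriv (deriv γ) x, normal γ x⟫ / ‖deriv γ x‖ ^ 2

/-- Arclength derivative `∂_s f = f_x/|γ_x|` of a function `f` along a curve `γ`. -/
def arcDeriv (γ : ℝ → E2) (f : ℝ → ℝ) (x : ℝ) : ℝ := deriv f x / ‖deriv γ x‖

/-- The backward heat kernel relative to `(x₀, T)`. -/
def backHeat (x₀ : E2) (T : ℝ) (x : E2) (t : ℝ) : ℝ :=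
  Real.exp (-‖x - x₀‖ ^ 2 / (4 * (T - t))) / Real.sqrt (4 * Real.pi * (T - t))


private lemma gauss_integrable : Integrable (fun y : ℝ => Real.exp (-y ^ 2 / 2)) := by
  have h : (fun y : ℝ => Real.exp (-y ^ 2 / 2)) = fun y : ℝ => Real.exp (-(1/2 : ℝ) * y ^ 2) := by
    funext y; ring_nf
  rw [h]
  exact integrable_exp_neg_mul_sq (by norm_num)

private lemma tail_nonneg (a : ℝ) : 0 ≤ ∫ y in Ioi a, Real.exp (-y ^ 2 / 2) :=
  setIntegral_nonneg measurableSet_Ioi fun y _ => (Real.exp_pos _).le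

private lemma tail_le_half {a : ℝ} (ha : 0 ≤ a) :
    (Real.sqrt (2 * Real.pi))⁻¹ * (∫ y in Ioi a, Real.exp (-y ^ 2 / 2)) ≤ 1 / 2 := by
  have h0 : (∫ y in Ioi a, Real.exp (-y ^ 2 / 2)) ≤ ∫ y in Ioi (0:ℝ), Real.exp (-y ^ 2 / 2) := by
    refine setIntegral_mono_set gauss_integrable.integrableOn ?_ ?_
    · exact Eventually.of_forall fun y => (Real.exp_pos _).le
    · exact HasSubset.Subset.eventuallyLE (Ioi_subset_Ioi ha)
  have h1 : (∫ y in Ioi (0:ℝ), Real.exp (-y ^ 2 / 2)) = Real.sqrt (2 * Real.pi) / 2 := by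
    have h : ∀ y : ℝ, -y ^ 2 / 2 = -(1/2 : ℝ) * y ^ 2 := fun y => by ring
    simp only [h]
    rw [integral_gaussian_Ioi]
    rw [show Real.pi / (1/2 : ℝ) = 2 * Real.pi by ring]
  have hs : 0 < Real.sqrt (2 * Real.pi) := Real.sqrt_pos.2 (by positivity)
  calc (Real.sqrt (2 * Real.pi))⁻¹ * (∫ y in Ioi a, Real.exp (-y ^ 2 / 2))
      ≤ (Real.sqrt (2 * Real.pi))⁻¹ * (Real.sqrt (2 * Real.pi) / 2) := by
        rw [← h1]; exact mul_le_mul_of_nonneg_left h0 (by positivity)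
    _ = 1 / 2 := by field_simp

private lemma tail_tendsto_zero :
    Tendsto (fun a : ℝ => ∫ y in Ioi a, Real.exp (-y ^ 2 / 2)) atTop (nhds 0) := by
  have key : Tendsto (fun a : ℝ => ∫ y, (Ioi a).indicator (fun y => Real.exp (-y ^ 2 / 2)) y)
      atTop (nhds (∫ _ : ℝ, (0:ℝ))) := by
    refine tendsto_integral_filter_of_dominated_convergence
      (fun y => Real.exp (-y ^ 2 / 2)) ?_ ?_ gauss_integrable ?_
    · exact Eventually.of_forall fun a =>
        (((Real.continuous_exp.comp (by continuity)).aestronglyMeasurable).indicator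
          measurableSet_Ioi)
    · refine Eventually.of_forall fun a => Eventually.of_forall fun y => ?_
      rw [Real.norm_eq_abs, abs_of_nonneg (Set.indicator_nonneg (fun z _ => (Real.exp_pos _).le) y)]
      exact Set.indicator_le_self' (fun z _ => (Real.exp_pos _).le) y
    · refine Eventually.of_forall fun y => ?_
      refine Tendsto.congr' ?_ tendsto_const_nhds
      filter_upwards [eventually_ge_atTop y] with a ha
      simp [Set.indicator_of_notMem, not_lt.2 ha]
  simp only [integral_zero] at key
  refine key.congr fun a => ?_
  rw [integral_indicator measurableSet_Ioi]

private lemma cov_key (T t d : ℝ) (ht : t < T) (hd : 0 < d) :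
    IntegrableOn (fun ξ => (2 * (T - ξ))⁻¹ * d *
        (Real.exp (-d ^ 2 / (4 * (T - ξ))) / Real.sqrt (4 * Real.pi * (T - ξ)))) (Ioo t T)
    ∧ (∫ ξ in Ioo t T, (2 * (T - ξ))⁻¹ * d *
        (Real.exp (-d ^ 2 / (4 * (T - ξ))) / Real.sqrt (4 * Real.pi * (T - ξ))))
      = (Real.sqrt (2 * Real.pi))⁻¹
        * ∫ y in Ioi (d / Real.sqrt (2 * (T - t))), Real.exp (-y ^ 2 / 2) := by
  set g : ℝ → ℝ := fun ξ => (2 * (T - ξ))⁻¹ * d *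
    (Real.exp (-d ^ 2 / (4 * (T - ξ))) / Real.sqrt (4 * Real.pi * (T - ξ))) with hg
  set a : ℝ := d / Real.sqrt (2 * (T - t)) with ha_def
  have hTt : 0 < 2 * (T - t) := by linarith
  have hsqa : 0 < Real.sqrt (2 * (T - t)) := Real.sqrt_pos.2 hTt
  have ha : 0 < a := div_pos hd hsqa
  have hsq : Real.sqrt (2 * (T - t)) ^ 2 = 2 * (T - t) := Real.sq_sqrt hTt.le
  have ha2 : a ^ 2 * (2 * (T - t)) = d ^ 2 := by
    rw [ha_def, div_pow, hsq]
    field_simp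
    exact div_self (sub_pos.2 ht).ne'
  set ψ : ℝ → ℝ := fun y => T - d ^ 2 / (2 * y ^ 2) with hψ
  set ψ' : ℝ → ℝ := fun y => d ^ 2 / y ^ 3 with hψ'
  have hderiv : ∀ y ∈ Ioi a, HasDerivWithinAt ψ (ψ' y) (Ioi a) y := by
    intro y hy
    have hy0 : 0 < y := ha.trans hy
    have h2 : HasDerivAt (fun y : ℝ => 2 * y ^ 2) (2 * (2 * y ^ 1)) y :=
      (hasDerivAt_pow 2 y).const_mul 2
    have h1 : HasDerivAt (fun y : ℝ => d ^ 2 / (2 * y ^ 2))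
        ((0 * (2 * y ^ 2) - d ^ 2 * (2 * (2 * y ^ 1))) / (2 * y ^ 2) ^ 2) y :=
      (hasDerivAt_const y (d ^ 2)).div h2 (by positivity)
    have h3 : HasDerivAt ψ (0 - (0 * (2 * y ^ 2) - d ^ 2 * (2 * (2 * y ^ 1))) / (2 * y ^ 2) ^ 2)
        y := (hasDerivAt_const y T).sub h1
    have h4 : (0 - (0 * (2 * y ^ 2) - d ^ 2 * (2 * (2 * y ^ 1))) / (2 * y ^ 2) ^ 2) = ψ' y := by
      rw [hψ']
      field_simp
      ring
    rw [h4] at h3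
    exact h3.hasDerivWithinAt
  have hmono : StrictMonoOn ψ (Ioi a) := by
    intro y1 h1 y2 h2 h12
    have hy1 : 0 < y1 := ha.trans h1
    have hlt : d ^ 2 / (2 * y2 ^ 2) < d ^ 2 / (2 * y1 ^ 2) :=
      div_lt_div_of_pos_left (by positivity) (by positivity) (by nlinarith)
    simp only [hψ]
    linarith
  have hinj : InjOn ψ (Ioi a) := hmono.injOn
  have himg : ψ '' Ioi a = Ioo t T := by
    ext ξ
    simp only [mem_image, mem_Ioi, mem_Ioo]
    constructor
    · rintro ⟨y, hy, rfl⟩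
      have hy0 : 0 < y := ha.trans hy
      constructor
      · have hlt : d ^ 2 / (2 * y ^ 2) < T - t := by
          rw [div_lt_iff₀ (by positivity)]
          nlinarith [ha2, mul_pos hTt (mul_pos (sub_pos.2 hy) (show 0 < y + a by linarith))]
        simp only [hψ]; linarith
      · have : 0 < d ^ 2 / (2 * y ^ 2) := by positivity
        simp only [hψ]; linarith
    · rintro ⟨h1, h2⟩
      have hTξ : 0 < 2 * (T - ξ) := by linarith
      have hsξ : 0 < Real.sqrt (2 * (T - ξ)) := Real.sqrt_pos.2 hTξ
      refine ⟨d / Real.sqrt (2 * (T - ξ)), ?_, ?_⟩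
      · have h3 : Real.sqrt (2 * (T - ξ)) < Real.sqrt (2 * (T - t)) :=
          Real.sqrt_lt_sqrt hTξ.le (by linarith)
        exact div_lt_div_of_pos_left hd hsξ h3
      · have h5 : Real.sqrt (2 * (T - ξ)) ^ 2 = 2 * (T - ξ) := Real.sq_sqrt hTξ.le
        have hne : T - ξ ≠ 0 := by linarith
        have hkey2 : d ^ 2 / (2 * (d ^ 2 / (2 * (T - ξ)))) = T - ξ := by
          rw [show 2 * (d ^ 2 / (2 * (T - ξ))) = d ^ 2 / (T - ξ) by
            field_simp]
          rw [div_div_eq_mul_div, mul_div_cancel_left₀ _ (pow_ne_zero 2 hd.ne')]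
        simp only [hψ, div_pow, h5, hkey2]
        ring
  have hkey : ∀ y ∈ Ioi a, |ψ' y| • g (ψ y) = (Real.sqrt (2 * Real.pi))⁻¹ * Real.exp (-y ^ 2 / 2) := by
    intro y hy
    have hy0 : 0 < y := ha.trans hy
    have hTξ : T - (T - d ^ 2 / (2 * y ^ 2)) = d ^ 2 / (2 * y ^ 2) := by ring
    have hsp : 0 < Real.sqrt (2 * Real.pi) := Real.sqrt_pos.2 (by positivity)
    simp only [hψ, hψ', hg, smul_eq_mul, hTξ]
    have e1 : -d ^ 2 / (4 * (d ^ 2 / (2 * y ^ 2))) = -y ^ 2 / 2 := by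
      field_simp
      ring
    have e2 : Real.sqrt (4 * Real.pi * (d ^ 2 / (2 * y ^ 2)))
        = Real.sqrt (2 * Real.pi) * (d / y) := by
      rw [show 4 * Real.pi * (d ^ 2 / (2 * y ^ 2)) = (2 * Real.pi) * (d / y) ^ 2 by
        field_simp; ring]
      rw [Real.sqrt_mul (by positivity), Real.sqrt_sq (by positivity)]
    have e3 : |d ^ 2 / y ^ 3| = d ^ 2 / y ^ 3 := abs_of_pos (by positivity)
    rw [e1, e2, e3]
    field_simp
  have hIntIoi : IntegrableOn (fun y => |ψ' y| • g (ψ y)) (Ioi a) := by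
    have : IntegrableOn (fun y : ℝ => (Real.sqrt (2 * Real.pi))⁻¹ * Real.exp (-y ^ 2 / 2))
        (Ioi a) := (gauss_integrable.const_mul _).integrableOn
    exact this.congr_fun (fun y hy => (hkey y hy).symm) measurableSet_Ioi
  have hInt : IntegrableOn g (Ioo t T) := by
    rw [← himg, integrableOn_image_iff_integrableOn_abs_deriv_smul measurableSet_Ioi hderiv hinj]
    exact hIntIoi
  refine ⟨hInt, ?_⟩
  rw [← himg, integral_image_eq_integral_abs_deriv_smul measurableSet_Ioi hderiv hinj,
    setIntegral_congr_fun measurableSet_Ioi hkey, integral_const_mul]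

private lemma main_bound (T : ℝ) (x₀ P : E2) (d : ℝ) (hd : d = ‖P - x₀‖) (τ : ℝ → E2)
    (hτ : ∀ ξ ∈ Set.Ico (0:ℝ) T, ‖τ ξ‖ = 1) (t : ℝ) (ht : t ∈ Set.Ico (0:ℝ) T) :
    |∫ ξ in t..T, ⟪(2 * (T - ξ))⁻¹ • (P - x₀), τ ξ⟫ * backHeat x₀ T P ξ|
      ≤ (Real.sqrt (2 * Real.pi))⁻¹
        * ∫ y in Set.Ioi (d / Real.sqrt (2 * (T - t))), Real.exp (-y ^ 2 / 2) := by
  have hd0 : 0 ≤ d := hd ▸ norm_nonneg _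
  rcases eq_or_lt_of_le hd0 with hd' | hd'
  · -- d = 0 : the integrand vanishes
    have hP : P - x₀ = 0 := by
      rw [← norm_eq_zero, ← hd, ← hd']
    have hz : (∫ ξ in t..T, ⟪(2 * (T - ξ))⁻¹ • (P - x₀), τ ξ⟫ * backHeat x₀ T P ξ) = 0 := by
      simp [hP]
    rw [hz, abs_zero]
    exact mul_nonneg (inv_nonneg.2 (Real.sqrt_nonneg _)) (tail_nonneg _)
  · have h1 : t < T := ht.2
    obtain ⟨hInt, hEq⟩ := cov_key T t d h1 hd'
    rw [intervalIntegral.integral_of_le h1.le, ← Real.norm_eq_abs]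
    calc ‖∫ ξ in Ioc t T, ⟪(2 * (T - ξ))⁻¹ • (P - x₀), τ ξ⟫ * backHeat x₀ T P ξ‖
        ≤ ∫ ξ in Ioc t T, ‖⟪(2 * (T - ξ))⁻¹ • (P - x₀), τ ξ⟫ * backHeat x₀ T P ξ‖ :=
          norm_integral_le_integral_norm _
      _ = ∫ ξ in Ioo t T, ‖⟪(2 * (T - ξ))⁻¹ • (P - x₀), τ ξ⟫ * backHeat x₀ T P ξ‖ :=
          integral_Ioc_eq_integral_Ioo
      _ ≤ ∫ ξ in Ioo t T, (2 * (T - ξ))⁻¹ * d *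
            (Real.exp (-d ^ 2 / (4 * (T - ξ))) / Real.sqrt (4 * Real.pi * (T - ξ))) := by
          refine integral_mono_of_nonneg (Eventually.of_forall fun ξ => norm_nonneg _) hInt ?_
          rw [EventuallyLE, ae_restrict_iff' measurableSet_Ioo]
          refine Eventually.of_forall fun ξ hξ => ?_
          have hTξ : 0 < T - ξ := by linarith [hξ.2]
          have hτξ : ‖τ ξ‖ = 1 := hτ ξ ⟨le_trans ht.1 hξ.1.le, hξ.2⟩
          have hbh : backHeat x₀ T P ξ
              = Real.exp (-d ^ 2 / (4 * (T - ξ))) / Real.sqrt (4 * Real.pi * (T - ξ)) := by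
            rw [backHeat, ← hd]
          have hbh0 : 0 ≤ backHeat x₀ T P ξ := by
            rw [hbh]; positivity
          have hi : |⟪(2 * (T - ξ))⁻¹ • (P - x₀), τ ξ⟫| ≤ (2 * (T - ξ))⁻¹ * d := by
            calc |⟪(2 * (T - ξ))⁻¹ • (P - x₀), τ ξ⟫|
                ≤ ‖(2 * (T - ξ))⁻¹ • (P - x₀)‖ * ‖τ ξ‖ := abs_real_inner_le_norm _ _
              _ = (2 * (T - ξ))⁻¹ * d := by
                  rw [hτξ, norm_smul, Real.norm_eq_abs,
                    abs_of_pos (by positivity : (0:ℝ) < (2 * (T - ξ))⁻¹), ← hd, mul_one]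
          calc ‖⟪(2 * (T - ξ))⁻¹ • (P - x₀), τ ξ⟫ * backHeat x₀ T P ξ‖
              = |⟪(2 * (T - ξ))⁻¹ • (P - x₀), τ ξ⟫| * backHeat x₀ T P ξ := by
                rw [Real.norm_eq_abs, abs_mul, abs_of_nonneg hbh0]
            _ ≤ (2 * (T - ξ))⁻¹ * d * backHeat x₀ T P ξ :=
                mul_le_mul_of_nonneg_right hi hbh0
            _ = (2 * (T - ξ))⁻¹ * d *
                  (Real.exp (-d ^ 2 / (4 * (T - ξ))) / Real.sqrt (4 * Real.pi * (T - ξ))) := by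
                rw [hbh]
      _ = (Real.sqrt (2 * Real.pi))⁻¹
            * ∫ y in Set.Ioi (d / Real.sqrt (2 * (T - t))), Real.exp (-y ^ 2 / 2) := hEq

/-- the boundary term of the monotonicity formula satisfies
`|∫_t^T ⟨(P−x₀)/(2(T−ξ)), τ(ξ)⟩ ρ_{x₀}(P,ξ) dξ| ≤ (1/√(2π)) ∫_{d/√(2(T−t))}^∞ e^{−y²/2} dy ≤ 1/2`
and tends to `0` as `t → T`. -/
theorem boundary_term_estimate (T : ℝ) (hT : 0 < T) (x₀ P : E2) (d : ℝ)
    (hd : d = ‖P - x₀‖) (τ : ℝ → E2)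
    (hτc : ContinuousOn τ (Set.Ico (0:ℝ) T))
    (hτ : ∀ ξ ∈ Set.Ico (0:ℝ) T, ‖τ ξ‖ = 1) :
    (∀ t ∈ Set.Ico (0:ℝ) T,
      |∫ ξ in t..T, ⟪(2 * (T - ξ))⁻¹ • (P - x₀), τ ξ⟫ * backHeat x₀ T P ξ|
        ≤ (Real.sqrt (2 * Real.pi))⁻¹
          * ∫ y in Set.Ioi (d / Real.sqrt (2 * (T - t))), Real.exp (-y ^ 2 / 2)
      ∧ (Real.sqrt (2 * Real.pi))⁻¹
          * (∫ y in Set.Ioi (d / Real.sqrt (2 * (T - t))), Real.exp (-y ^ 2 / 2))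
        ≤ 1 / 2)
    ∧ Filter.Tendsto
        (fun t => ∫ ξ in t..T, ⟪(2 * (T - ξ))⁻¹ • (P - x₀), τ ξ⟫ * backHeat x₀ T P ξ)
        (nhdsWithin T (Set.Iio T)) (nhds 0) := by
  constructor
  · intro t ht
    refine ⟨main_bound T x₀ P d hd τ hτ t ht, tail_le_half ?_⟩
    exact div_nonneg (hd ▸ norm_nonneg _) (Real.sqrt_nonneg _)
  · have hd0 : 0 ≤ d := hd ▸ norm_nonneg _
    rcases eq_or_lt_of_le hd0 with hd' | hd'
    · have hP : P - x₀ = 0 := by rw [← norm_eq_zero, ← hd, ← hd']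
      have hz : (fun t => ∫ ξ in t..T, ⟪(2 * (T - ξ))⁻¹ • (P - x₀), τ ξ⟫ * backHeat x₀ T P ξ)
          = fun _ => (0:ℝ) := by
        funext t; simp [hP]
      rw [hz]
      exact tendsto_const_nhds
    · have hs : Tendsto (fun t => Real.sqrt (2 * (T - t))) (nhdsWithin T (Set.Iio T))
          (nhdsWithin 0 (Set.Ioi 0)) := by
        apply tendsto_nhdsWithin_of_tendsto_nhds_of_eventually_within
        · have hcont : Continuous fun t : ℝ => Real.sqrt (2 * (T - t)) := by
            exact Real.continuous_sqrt.comp (by continuity)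
          have := (hcont.tendsto T).mono_left (nhdsWithin_le_nhds (s := Set.Iio T))
          simpa using this
        · filter_upwards [self_mem_nhdsWithin] with x hx
          exact mem_Ioi.2 (Real.sqrt_pos.2 (by simp only [mem_Iio] at hx; linarith))
      have hA : Tendsto (fun t => d / Real.sqrt (2 * (T - t))) (nhdsWithin T (Set.Iio T))
          atTop := by
        simp only [div_eq_mul_inv]
        exact (tendsto_inv_nhdsGT_zero.comp hs).const_mul_atTop hd'
      have hB : Tendsto (fun t => (Real.sqrt (2 * Real.pi))⁻¹
          * ∫ y in Set.Ioi (d / Real.sqrt (2 * (T - t))), Real.exp (-y ^ 2 / 2))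
          (nhdsWithin T (Set.Iio T)) (nhds 0) := by
        have := (tail_tendsto_zero.comp hA).const_mul (Real.sqrt (2 * Real.pi))⁻¹
        simpa using this
      refine squeeze_zero_norm' ?_ hB
      filter_upwards [Ioo_mem_nhdsLT hT] with t htmem
      rw [Real.norm_eq_abs]
      exact main_bound T x₀ P d hd τ hτ t ⟨htmem.1.le, htmem.2⟩
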